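/- Let α ∈ (0,1) and let f : ℝ → ℝ be continuous, twice continuously differentiable on ℝ∖{0}, with one-sided derivatives f'(0⁺) and f'(0⁻) at 0. Given reals ℓ⁺ = 2α·ℓ and ℓ⁻ = 2(1-α)·ℓ for some ℓ ≥ 0 and D⁺, D⁻ > 0, the quantity [(α√D⁺ - (1-α)√D⁻)/(2α)]·f'(0⁻)·ℓ⁺_B + (√D⁺/2)·(f'(0⁺) - f'(0⁻))·ℓ⁺_B vanishes for all ℓ⁺_B ≥ 0 and all f with λf'(0⁺) = (1-λ)f'(0⁻) if and only if α = λ√D⁻/(λ√D⁻+(1-λ)√D⁺). -/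

import Mathlib

open Set

/-- The local-time terms arising from the Itô–Tanaka formula,
`[(α√D⁺ - (1-α)√D⁻)/(2α)]·f'(0⁻)·ℓ + (√D⁺/2)·(f'(0⁺) - f'(0⁻))·ℓ`,
vanish for all `ℓ ≥ 0` and all `f` continuous, `C²` off `0`, with one-sided
derivatives `f'(0⁺), f'(0⁻)` satisfying `λf'(0⁺) = (1-λ)f'(0⁻)`, if and only
if `α = λ√D⁻/(λ√D⁻+(1-λ)√D⁺)`. -/
theorem stmt_11 (Dp Dm lam a : ℝ) (hDp : 0 < Dp) (hDm : 0 < Dm)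
    (hlam : lam ∈ Set.Ioo (0:ℝ) 1) (ha : a ∈ Set.Ioo (0:ℝ) 1) :
    (∀ (f : ℝ → ℝ) (dp dm : ℝ), Continuous f →
        ContDiffOn ℝ 2 f ({0}ᶜ : Set ℝ) →
        HasDerivWithinAt f dp (Ioi 0) 0 →
        HasDerivWithinAt f dm (Iio 0) 0 →
        lam * dp = (1 - lam) * dm →
        ∀ ℓ : ℝ, 0 ≤ ℓ →
          ((a * Real.sqrt Dp - (1 - a) * Real.sqrt Dm) / (2 * a)) * dm * ℓ
            + (Real.sqrt Dp / 2) * (dp - dm) * ℓ = 0) ↔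
      a = lam * Real.sqrt Dm /
        (lam * Real.sqrt Dm + (1 - lam) * Real.sqrt Dp) := by
  obtain ⟨hl0, hl1⟩ := hlam
  obtain ⟨ha0, ha1⟩ := ha
  have hsp : 0 < Real.sqrt Dp := Real.sqrt_pos.2 hDp
  have hsm : 0 < Real.sqrt Dm := Real.sqrt_pos.2 hDm
  set sp := Real.sqrt Dp with hspdef
  set sm := Real.sqrt Dm with hsmdef
  have hl1' : 0 < 1 - lam := by linarith
  have hd : 0 < lam * sm + (1 - lam) * sp := by positivity
  constructor
  · intro H
    set f : ℝ → ℝ := fun x => (1 - lam) * max x 0 + lam * min x 0 with hf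
    have hcont : Continuous f := by
      apply Continuous.add
      · exact continuous_const.mul (continuous_id.max continuous_const)
      · exact continuous_const.mul (continuous_id.min continuous_const)
    have hC2 : ContDiffOn ℝ 2 f ({0}ᶜ : Set ℝ) := by
      intro x hx
      rcases lt_or_gt_of_ne (show x ≠ 0 from hx) with hlt | hgt
      · have hev : f =ᶠ[nhds x] (fun y => lam * y) := by
          filter_upwards [Iio_mem_nhds hlt] with y hy
          simp [hf, max_eq_right hy.out.le, min_eq_left hy.out.le]
        exact (((contDiff_const.mul contDiff_id).contDiffAt
          (n := 2)).congr_of_eventuallyEq hev).contDiffWithinAt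
      · have hev : f =ᶠ[nhds x] (fun y => (1 - lam) * y) := by
          filter_upwards [Ioi_mem_nhds hgt] with y hy
          simp [hf, max_eq_left hy.out.le, min_eq_right hy.out.le]
        exact (((contDiff_const.mul contDiff_id).contDiffAt
          (n := 2)).congr_of_eventuallyEq hev).contDiffWithinAt
    have hdp : HasDerivWithinAt f (1 - lam) (Ioi 0) 0 := by
      have hg : HasDerivWithinAt (fun y : ℝ => (1 - lam) * y) (1 - lam) (Ioi 0) 0 := by
        simpa using ((hasDerivAt_id (0:ℝ)).const_mul (1 - lam)).hasDerivWithinAt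
      apply hg.congr
      · intro y hy
        simp [hf, max_eq_left hy.out.le, min_eq_right hy.out.le]
      · simp [hf]
    have hdm : HasDerivWithinAt f lam (Iio 0) 0 := by
      have hg : HasDerivWithinAt (fun y : ℝ => lam * y) lam (Iio 0) 0 := by
        simpa using ((hasDerivAt_id (0:ℝ)).const_mul lam).hasDerivWithinAt
      apply hg.congr
      · intro y hy
        simp [hf, max_eq_right hy.out.le, min_eq_left hy.out.le]
      · simp [hf]
    have key := H f (1 - lam) lam hcont hC2 hdp hdm (by ring) 1 zero_le_one
    rw [eq_div_iff hd.ne']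
    have ha0' : (2 : ℝ) * a ≠ 0 := by positivity
    field_simp at key
    nlinarith [key, hsp, hsm, ha0]
  · intro h f dp dm _ _ _ _ hrel ℓ _
    have hcoef : (a * sp - (1 - a) * sm) / (2 * a) = sp * (2 * lam - 1) / (2 * lam) := by
      rw [h]; field_simp; ring
    rw [hcoef]
    field_simp
    linear_combination (sp * ℓ) * hrel
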